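/- For n ≥ 2, let π ∈ S_{n-2} and define τ ∈ S_n by τ(1) = n, τ(i) = π(i-1) + 1 for 2 ≤ i ≤ n-1, and τ(n) = 1. Then π is shallow if and only if τ is shallow. -/

import Mathlib

open Equiv Finset

/-- Total displacement D(π) = Σ |π(i) - i|. -/
def dispD {n : ℕ} (π : Equiv.Perm (Fin n)) : ℕ :=
  ∑ i : Fin n, ((π i : ℤ) - (i : ℤ)).natAbs

/-- Inversion number I(π). -/
def invNum {n : ℕ} (π : Equiv.Perm (Fin n)) : ℕ :=
  (Finset.univ.filter (fun p : Fin n × Fin n => p.1 < p.2 ∧ π p.2 < π p.1)).card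

/-- Number of cycles of π, counting fixed points as cycles. -/
def cycNum {n : ℕ} (π : Equiv.Perm (Fin n)) : ℕ :=
  π.cycleType.card + (Finset.univ.filter (fun i => π i = i)).card

/-- Reflection length T(π) = n - cyc(π). -/
def reflLen {n : ℕ} (π : Equiv.Perm (Fin n)) : ℕ :=
  n - cycNum π

/-- A permutation is shallow when I(π) + T(π) = D(π). -/
def IsShallow {n : ℕ} (π : Equiv.Perm (Fin n)) : Prop :=
  invNum π + reflLen π = dispD π

section Aux

variable {m : ℕ}

/-- The middle embedding. -/
private def emb (i : Fin m) : Fin (m + 2) := i.castSucc.succ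

private lemma emb_val (i : Fin m) : (emb i : ℕ) = i + 1 := rfl

private lemma emb_ne_zero (i : Fin m) : emb i ≠ 0 := by
  intro h
  have := congrArg Fin.val h
  simp [emb_val] at this

private lemma emb_ne_last (i : Fin m) : emb i ≠ Fin.last (m + 1) := by
  intro h
  have := congrArg Fin.val h
  rw [emb_val] at this
  simp [Fin.last] at this
  omega

private lemma emb_lt_emb {i j : Fin m} : emb i < emb j ↔ i < j := by
  simp only [Fin.lt_def, emb_val]
  omega

private lemma emb_inj {i j : Fin m} (h : emb i = emb j) : i = j := by
  have := congrArg Fin.val h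
  rw [emb_val, emb_val] at this
  exact Fin.ext (by omega)

private lemma aux_lt {i j : Fin m} : (i.castSucc.succ : Fin (m + 2)) < j.castSucc.succ ↔ i < j := by
  simp only [Fin.lt_def, Fin.val_succ, Fin.coe_castSucc]
  omega

private lemma aux_ne_last (i : Fin m) : (i.castSucc.succ : Fin (m + 2)) ≠ Fin.last (m + 1) := by
  intro h
  have := congrArg Fin.val h
  simp only [Fin.val_succ, Fin.coe_castSucc, Fin.val_last] at this
  omega

private lemma aux_inj {i j : Fin m}
    (h : (i.castSucc.succ : Fin (m + 2)) = j.castSucc.succ) : i = j := by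
  have := congrArg Fin.val h
  simp only [Fin.val_succ, Fin.coe_castSucc] at this
  exact Fin.ext (by omega)

private lemma aux_mem (j : Fin (m + 2)) (h1 : j ≠ 0) (h2 : j ≠ Fin.last (m + 1)) :
    ∃ i : Fin m, j = i.castSucc.succ := by
  have hv1 : j.val ≠ 0 := fun h => h1 (Fin.ext h)
  have hv2 : j.val ≠ m + 1 := fun h => h2 (Fin.ext (by simp [Fin.val_last, h]))
  have := j.isLt
  refine ⟨⟨j.val - 1, by omega⟩, Fin.ext ?_⟩
  simp only [Fin.val_succ, Fin.coe_castSucc]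
  omega

private lemma zero_ne_last : (0 : Fin (m + 2)) ≠ Fin.last (m + 1) := by
  intro h
  have := congrArg Fin.val h
  simp [Fin.val_last] at this

/-- The equivalence between `Fin m` and the middle of `Fin (m+2)`. -/
private def midEquiv (m : ℕ) : Fin m ≃ {j : Fin (m + 2) // j ≠ 0 ∧ j ≠ Fin.last (m + 1)} where
  toFun i := ⟨i.castSucc.succ, Fin.succ_ne_zero _, aux_ne_last i⟩
  invFun j := ⟨(j : Fin (m + 2)).val - 1, by
    have h1 : (j : Fin (m + 2)).val ≠ 0 := fun h => j.2.1 (Fin.ext h)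
    have h2 : (j : Fin (m + 2)).val ≠ m + 1 := fun h => j.2.2 (Fin.ext (by simp [Fin.val_last, h]))
    have := (j : Fin (m + 2)).isLt
    omega⟩
  left_inv i := by
    apply Fin.ext
    simp only [Fin.val_succ, Fin.coe_castSucc]
    omega
  right_inv j := by
    apply Subtype.ext
    apply Fin.ext
    have h1 : (j : Fin (m + 2)).val ≠ 0 := fun h => j.2.1 (Fin.ext h)
    simp only [Fin.val_succ, Fin.coe_castSucc]
    omega

private lemma cycNum_le (π : Equiv.Perm (Fin m)) : cycNum π ≤ m := by
  have h1 : π.cycleType.card ≤ π.cycleType.sum := by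
    have := Multiset.card_nsmul_le_sum (s := π.cycleType) (a := 1)
      (fun x hx => (Equiv.Perm.one_lt_of_mem_cycleType hx).le)
    simpa using this
  rw [Equiv.Perm.sum_cycleType] at h1
  have h2 : π.support.card + (Finset.univ.filter (fun i => π i = i)).card = m := by
    have := Finset.card_filter_add_card_filter_not (s := (univ : Finset (Fin m)))
      (p := fun i => π i ≠ i)
    simpa [Equiv.Perm.support, Fintype.card_fin] using this
  unfold cycNum
  omega

end Aux

theorem stmt11 (m : ℕ) (π : Equiv.Perm (Fin m)) (τ : Equiv.Perm (Fin (m + 2)))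
    (h0 : τ 0 = Fin.last (m + 1))
    (hmid : ∀ i : Fin m, τ i.castSucc.succ = (π i).castSucc.succ)
    (hlast : τ (Fin.last (m + 1)) = 0) :
    IsShallow π ↔ IsShallow τ := by
  have hmid' : ∀ i : Fin m, τ (emb i) = emb (π i) := hmid
  -- displacement
  have hD : dispD τ = dispD π + (2 * m + 2) := by
    unfold dispD
    rw [Fin.sum_univ_succ, Fin.sum_univ_castSucc]
    have hsucclast : (Fin.last m).succ = Fin.last (m + 1) := rfl
    have e0 : ((τ 0 : ℤ) - ((0 : Fin (m+2)) : ℤ)).natAbs = m + 1 := by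
      rw [h0]; simp [Fin.last]; omega
    have elast : ((τ (Fin.last m).succ : ℤ) - (((Fin.last m).succ : Fin (m+2)) : ℤ)).natAbs
        = m + 1 := by
      rw [hsucclast, hlast]
      simp [Fin.last]
      omega
    have emidsum : ∀ k : Fin m,
        ((τ k.castSucc.succ : ℤ) - ((k.castSucc.succ : Fin (m+2)) : ℤ)).natAbs
        = ((π k : ℤ) - (k : ℤ)).natAbs := by
      intro k
      rw [hmid k]
      simp only [Fin.val_succ, Fin.coe_castSucc]
      push_cast
      congr 1
      ring
    rw [e0, elast]
    rw [Finset.sum_congr rfl (fun k _ => emidsum k)]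
    ring
  -- inversions
  have hne_last : ∀ b : Fin (m+2), b ≠ 0 → τ b ≠ Fin.last (m + 1) := by
    intro b hb hEq
    exact hb (τ.injective (hEq.trans h0.symm))
  have hI : invNum τ = invNum π + (2 * m + 1) := by
    have key : ∀ {n : ℕ} (σ : Equiv.Perm (Fin n)), invNum σ =
        ∑ a : Fin n, ∑ b : Fin n, if a < b ∧ σ b < σ a then 1 else 0 := by
      intro n σ
      unfold invNum
      rw [Finset.card_filter, Fintype.sum_prod_type]
    rw [key τ, key π, Fin.sum_univ_succ]
    have T1 : (∑ b : Fin (m+2), if (0:Fin (m+2)) < b ∧ τ b < τ 0 then 1 else 0) = m + 1 := by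
      rw [Fin.sum_univ_succ]
      simp only [lt_self_iff_false, false_and, if_false, zero_add]
      have hc : ∀ i : Fin (m+1), ((0:Fin (m+2)) < i.succ ∧ τ i.succ < τ 0) := by
        intro i
        refine ⟨i.succ_pos, ?_⟩
        rw [h0]
        exact Fin.lt_last_iff_ne_last.mpr (hne_last _ (Fin.succ_ne_zero i))
      rw [Finset.sum_congr rfl (fun i _ => if_pos (hc i))]
      simp
    have hmidterm : ∀ k : Fin m,
        (∑ b : Fin (m+2), if k.castSucc.succ < b ∧ τ b < τ k.castSucc.succ then 1 else 0)
        = (∑ b : Fin m, if k < b ∧ π b < π k then 1 else 0) + 1 := by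
      intro k
      rw [Fin.sum_univ_succ, Fin.sum_univ_castSucc]
      have hb0 : ¬((k.castSucc.succ : Fin (m+2)) < 0 ∧ τ 0 < τ k.castSucc.succ) := by
        rintro ⟨hb, -⟩
        exact absurd hb (Fin.not_lt.mpr (Fin.zero_le _))
      have hlast' : ((Fin.last m).succ : Fin (m+2)) = Fin.last (m+1) := rfl
      have hbl : ((k.castSucc.succ : Fin (m+2)) < (Fin.last m).succ
          ∧ τ (Fin.last m).succ < τ k.castSucc.succ) := by
        rw [hlast', hlast, hmid k]
        exact ⟨Fin.lt_last_iff_ne_last.mpr (aux_ne_last k), Fin.pos_iff_ne_zero.mpr (Fin.succ_ne_zero _)⟩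
      rw [if_neg hb0, if_pos hbl]
      have hmids : ∀ l : Fin m,
          (if (k.castSucc.succ : Fin (m+2)) < l.castSucc.succ
              ∧ τ l.castSucc.succ < τ k.castSucc.succ then 1 else 0)
          = (if k < l ∧ π l < π k then 1 else 0) := by
        intro l
        rw [hmid l, hmid k]
        exact if_congr (and_congr aux_lt aux_lt) rfl rfl
      rw [Finset.sum_congr rfl (fun l _ => hmids l)]
      omega
    have T2 : (∑ i : Fin (m+1), ∑ b : Fin (m+2),
        if i.succ < b ∧ τ b < τ i.succ then 1 else 0)
        = (∑ a : Fin m, ∑ b : Fin m, if a < b ∧ π b < π a then 1 else 0) + m := by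
      rw [Fin.sum_univ_castSucc]
      have hlterm : (∑ b : Fin (m+2),
          if (Fin.last m).succ < b ∧ τ b < τ (Fin.last m).succ then 1 else 0) = 0 := by
        apply Finset.sum_eq_zero
        intro b _
        rw [if_neg]
        rintro ⟨hb, -⟩
        have hlast' : ((Fin.last m).succ : Fin (m+2)) = Fin.last (m+1) := rfl
        rw [hlast'] at hb
        exact absurd hb (Fin.not_lt.mpr (Fin.le_last b))
      rw [hlterm, add_zero]
      rw [Finset.sum_congr rfl (fun k _ => hmidterm k), Finset.sum_add_distrib]
      simp
    rw [T1, T2]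
    ring
  -- cycles
  have hC : cycNum τ = cycNum π + 1 := by
    classical
    set f := midEquiv m with hf
    set π' := π.extendDomain f with hπ'
    have hπ'mid : ∀ i : Fin m, π' i.castSucc.succ = (π i).castSucc.succ := by
      intro i
      have := Equiv.Perm.extendDomain_apply_image π f i
      exact this
    have hπ'0 : π' 0 = 0 :=
      Equiv.Perm.extendDomain_apply_not_subtype π f (by rintro ⟨h, -⟩; exact h rfl)
    have hπ'l : π' (Fin.last (m+1)) = Fin.last (m+1) :=
      Equiv.Perm.extendDomain_apply_not_subtype π f (by rintro ⟨-, h⟩; exact h rfl)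
    have hτeq : τ = Equiv.swap 0 (Fin.last (m+1)) * π' := by
      ext j
      rw [Equiv.Perm.mul_apply]
      rcases eq_or_ne j 0 with rfl | hj0
      · rw [hπ'0, Equiv.swap_apply_left, h0]
      rcases eq_or_ne j (Fin.last (m+1)) with rfl | hjl
      · rw [hπ'l, Equiv.swap_apply_right, hlast]
      · obtain ⟨i, rfl⟩ := aux_mem j hj0 hjl
        rw [hπ'mid i, hmid i,
          Equiv.swap_apply_of_ne_of_ne (Fin.succ_ne_zero _) (aux_ne_last _)]
    have hdisj : (Equiv.swap (0 : Fin (m+2)) (Fin.last (m+1))).Disjoint π' := by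
      intro j
      by_cases hj : j ≠ 0 ∧ j ≠ Fin.last (m+1)
      · exact Or.inl (Equiv.swap_apply_of_ne_of_ne hj.1 hj.2)
      · exact Or.inr (Equiv.Perm.extendDomain_apply_not_subtype π f hj)
    have hct : τ.cycleType.card = π.cycleType.card + 1 := by
      rw [hτeq, Equiv.Perm.Disjoint.cycleType_mul hdisj]
      rw [Multiset.card_add]
      have h2 : (Equiv.swap (0 : Fin (m+2)) (Fin.last (m+1))).cycleType.card = 1 :=
        Equiv.Perm.card_cycleType_eq_one.mpr (Equiv.Perm.isCycle_swap zero_ne_last)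
      rw [h2, Equiv.Perm.cycleType_extendDomain]
      omega
    have hfix : (Finset.univ.filter (fun j : Fin (m+2) => τ j = j)).card
        = (Finset.univ.filter (fun i : Fin m => π i = i)).card := by
      symm
      apply Finset.card_bij (fun (a : Fin m) _ => a.castSucc.succ)
      · intro a ha
        simp only [Finset.mem_filter, Finset.mem_univ, true_and] at ha ⊢
        rw [hmid a, ha]
      · intro a _ b _ h
        exact aux_inj h
      · intro j hj
        simp only [Finset.mem_filter, Finset.mem_univ, true_and] at hj
        have hj0 : j ≠ 0 := by
          rintro rfl
          rw [h0] at hj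
          exact zero_ne_last hj.symm
        have hjl : j ≠ Fin.last (m+1) := by
          rintro rfl
          rw [hlast] at hj
          exact zero_ne_last hj
        obtain ⟨i, rfl⟩ := aux_mem j hj0 hjl
        refine ⟨i, ?_, rfl⟩
        simp only [Finset.mem_filter, Finset.mem_univ, true_and]
        rw [hmid i] at hj
        exact aux_inj hj
    unfold cycNum
    rw [hct, hfix]
    omega
  have hR : reflLen τ = reflLen π + 1 := by
    have := cycNum_le π
    unfold reflLen
    rw [hC]
    omega
  constructor <;> intro h <;> unfold IsShallow at * <;> omega
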